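/- arXiv:2210.11281 — 3 statements merged into one kernel-verified Lean document; each statement's English description precedes it below -/
import Mathlib

section
/- Let H_1, …, H_L be Hermitian n×n complex matrices with Λ := max_{1≤i≤L} ‖H_i‖, let k ≥ 1 and λ ∈ ℂ, and let S^{(2k)} be the (2k)-th order Trotter–Suzuki product formula for H_1, …, H_L. Then the Taylor remainder beyond order 2k (as a series in λ) of S^{(2k)}(λ/2) satisfies ‖R_{2k}(S^{(2k)}(λ/2))‖ ≤ ((|λ|[2·5^{k−1}(L−1)+1]Λ/2)^{2k+1} / (2k+1)!) · exp(|λ|[2·5^{k−1}(L−1)+1]Λ/2). -/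
open scoped Nat Matrix.Norms.L2Operator

/-- The coefficient `p_k := 1 / (4 − 4^{1/(2k−1)})` in the recursive Trotter–Suzuki
construction. -/
noncomputable def suzukiP (k : ℕ) : ℝ :=
  1 / (4 - (4 : ℝ) ^ ((1 : ℝ) / (2 * (k : ℝ) - 1)))

/-- The `(2k)`-th order Trotter–Suzuki product formula `S^{(2k)}(λ)` for the Hermitian matrices
`H_1, …, H_L`: `suzuki H k λ = S^{(2k)}(λ)`, defined by
`S^{(2)}(λ) := ∏_{i=1}^L e^{λ H_i/2} · ∏_{i=L}^1 e^{λ H_i/2}` and, for `k ≥ 2`,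
`S^{(2k)}(λ) := [S^{(2k−2)}(p_k λ)]^2 · S^{(2k−2)}((1−4p_k)λ) · [S^{(2k−2)}(p_k λ)]^2`. -/
noncomputable def suzuki {n L : ℕ} (H : Fin L → Matrix (Fin n) (Fin n) ℂ) :
    ℕ → ℂ → Matrix (Fin n) (Fin n) ℂ
  | 0, _ => 1
  | 1, lam =>
      (List.ofFn fun i : Fin L => NormedSpace.exp ((lam / 2) • H i)).prod *
        (List.ofFn fun i : Fin L => NormedSpace.exp ((lam / 2) • H i.rev)).prod
  | k + 2, lam =>
      suzuki H (k + 1) ((suzukiP (k + 2) : ℂ) * lam) ^ 2 *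
        suzuki H (k + 1) ((1 - 4 * (suzukiP (k + 2) : ℂ)) * lam) *
          suzuki H (k + 1) ((suzukiP (k + 2) : ℂ) * lam) ^ 2

section Aux

set_option linter.unusedSectionVars false

open Filter

variable {A : Type*} [NormedRing A] [NormedAlgebra ℂ A] [CompleteSpace A]

/-- `f` has an entire power series expansion whose `j`-th coefficient is bounded by `a^j/j!`. -/
def ExpBound (f : ℂ → A) (a : ℝ) : Prop :=
  0 ≤ a ∧ ∃ D : ℕ → A, (∀ μ : ℂ, HasSum (fun j : ℕ => μ ^ j • D j) (f μ)) ∧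
    ∀ j, ‖D j‖ ≤ a ^ j / (j ! : ℝ)

theorem summable_aux (a : ℝ) (μ : ℂ) {D : ℕ → A} (hD : ∀ j, ‖D j‖ ≤ a ^ j / (j ! : ℝ)) :
    Summable fun j : ℕ => ‖μ ^ j • D j‖ := by
  refine Summable.of_nonneg_of_le (fun j => norm_nonneg _) (fun j => ?_)
    ((Real.summable_pow_div_factorial (‖μ‖ * a)))
  rw [norm_smul, norm_pow, mul_pow]
  calc ‖μ‖ ^ j * ‖D j‖ ≤ ‖μ‖ ^ j * (a ^ j / (j ! : ℝ)) := by
        exact mul_le_mul_of_nonneg_left (hD j) (by positivity)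
    _ = ‖μ‖ ^ j * a ^ j / (j ! : ℝ) := by ring
    _ = ‖μ‖ ^ j * a ^ j / (j ! : ℝ) := rfl

theorem ExpBound.mono {f : ℂ → A} {a b : ℝ} (hf : ExpBound f a) (hab : a ≤ b) :
    ExpBound f b := by
  obtain ⟨ha, D, hs, hle⟩ := hf
  exact ⟨ha.trans hab, D, hs, fun j => (hle j).trans (by gcongr)⟩

theorem ExpBound.congr {f g : ℂ → A} {a : ℝ} (hf : ExpBound f a) (h : ∀ μ, f μ = g μ) :
    ExpBound g a := by
  obtain ⟨ha, D, hs, hle⟩ := hf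
  exact ⟨ha, D, fun μ => h μ ▸ hs μ, hle⟩

theorem ExpBound.comp_mul {f : ℂ → A} {a : ℝ} (hf : ExpBound f a) (c : ℂ) :
    ExpBound (fun μ => f (c * μ)) (‖c‖ * a) := by
  obtain ⟨ha, D, hs, hle⟩ := hf
  refine ⟨by positivity, fun j => c ^ j • D j, fun μ => ?_, fun j => ?_⟩
  · have := hs (c * μ)
    convert this using 2 with j
    rw [smul_comm, ← smul_assoc, smul_eq_mul, ← mul_pow]
  · rw [norm_smul, norm_pow, mul_pow, mul_div_assoc]
    exact mul_le_mul_of_nonneg_left (hle j) (by positivity)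

theorem ExpBound.one (hone : ‖(1 : A)‖ ≤ 1) : ExpBound (fun _ : ℂ => (1 : A)) 0 := by
  refine ⟨le_refl 0, fun j => if j = 0 then 1 else 0, fun μ => ?_, fun j => ?_⟩
  · have h := hasSum_single (f := fun j : ℕ => μ ^ j • (if j = 0 then (1 : A) else 0)) 0
      (fun b hb => by simp [hb])
    simpa using h
  · rcases Nat.eq_zero_or_pos j with hj | hj
    · subst hj; simpa using hone
    · simp only [Nat.pos_iff_ne_zero.mp hj, if_false, norm_zero]
      positivity

theorem ExpBound.expo (hone : ‖(1 : A)‖ ≤ 1) (B : A) :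
    ExpBound (fun μ : ℂ => NormedSpace.exp (μ • B)) ‖B‖ := by
  refine ⟨norm_nonneg B, fun j => ((j ! : ℂ))⁻¹ • B ^ j, fun μ => ?_, fun j => ?_⟩
  · have h := NormedSpace.exp_series_hasSum_exp' (𝕂 := ℂ) (μ • B)
    convert h using 2 with j
    rw [smul_pow, smul_comm]
  · rw [norm_smul]
    have h1 : ‖((j ! : ℂ))⁻¹‖ = ((j ! : ℝ))⁻¹ := by
      rw [norm_inv]; norm_num
    rw [h1, div_eq_inv_mul]
    rcases Nat.eq_zero_or_pos j with hj | hj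
    · subst hj; simpa using hone
    · exact mul_le_mul_of_nonneg_left (norm_pow_le' B hj) (by positivity)

theorem binom_aux (a b : ℝ) (n : ℕ) :
    ∑ i ∈ Finset.range (n + 1), a ^ i / (i ! : ℝ) * (b ^ (n - i) / ((n - i)! : ℝ))
      = (a + b) ^ n / (n ! : ℝ) := by
  rw [add_pow, Finset.sum_div]
  refine Finset.sum_congr rfl fun i hi => ?_
  have hin : i ≤ n := Finset.mem_range_succ_iff.mp hi
  rw [Nat.cast_choose ℝ hin]
  have h1 : (i ! : ℝ) ≠ 0 := by positivity
  have h2 : ((n - i)! : ℝ) ≠ 0 := by positivity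
  have h3 : (n ! : ℝ) ≠ 0 := by positivity
  field_simp

theorem ExpBound.mul {f g : ℂ → A} {a b : ℝ} (hf : ExpBound f a) (hg : ExpBound g b) :
    ExpBound (fun μ => f μ * g μ) (a + b) := by
  obtain ⟨ha, D, hDsum, hDle⟩ := hf
  obtain ⟨hb, E, hEsum, hEle⟩ := hg
  refine ⟨by linarith, fun n => ∑ i ∈ Finset.range (n + 1), D i * E (n - i), fun μ => ?_,
    fun n => ?_⟩
  · have hDn := summable_aux a μ hDle
    have hEn := summable_aux b μ hEle
    have key : ∑' n : ℕ, ∑ i ∈ Finset.range (n + 1), (μ ^ i • D i) * (μ ^ (n - i) • E (n - i))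
        = f μ * g μ := by
      rw [← (hDsum μ).tsum_eq, ← (hEsum μ).tsum_eq,
        tsum_mul_tsum_eq_tsum_sum_range_of_summable_norm hDn hEn]
    have hterm : ∀ n : ℕ, ∑ i ∈ Finset.range (n + 1), (μ ^ i • D i) * (μ ^ (n - i) • E (n - i))
        = μ ^ n • ∑ i ∈ Finset.range (n + 1), D i * E (n - i) := by
      intro n
      rw [Finset.smul_sum]
      refine Finset.sum_congr rfl fun i hi => ?_
      have hin : i ≤ n := Finset.mem_range_succ_iff.mp hi
      rw [smul_mul_smul_comm, ← pow_add, Nat.add_sub_cancel' hin]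
    have hsummable : Summable fun n : ℕ =>
        μ ^ n • ∑ i ∈ Finset.range (n + 1), D i * E (n - i) :=
      Summable.congr
        (summable_sum_mul_range_of_summable_norm' hDn hDn.of_norm hEn hEn.of_norm) hterm
    rw [Summable.hasSum_iff hsummable]
    show _ = f μ * g μ
    rw [← key]
    exact (tsum_congr hterm).symm
  · calc ‖∑ i ∈ Finset.range (n + 1), D i * E (n - i)‖
        ≤ ∑ i ∈ Finset.range (n + 1), a ^ i / (i ! : ℝ) * (b ^ (n - i) / ((n - i)! : ℝ)) := by
          refine (norm_sum_le _ _).trans (Finset.sum_le_sum fun i _ => ?_)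
          exact (norm_mul_le _ _).trans
            (mul_le_mul (hDle i) (hEle (n - i)) (norm_nonneg _) (by positivity))
    _ = (a + b) ^ n / (n ! : ℝ) := binom_aux a b n

theorem expBound_list_prod (hone : ‖(1 : A)‖ ≤ 1) {c : ℝ} (hc : 0 ≤ c) :
    ∀ (m : ℕ) (B : Fin m → A), (∀ i, ‖B i‖ ≤ c) →
      ExpBound (fun μ : ℂ => (List.ofFn fun i : Fin m => NormedSpace.exp (μ • B i)).prod)
        ((m : ℝ) * c) := by
  intro m
  induction m with
  | zero =>
      intro B hB
      refine ((ExpBound.one hone).congr (fun μ => ?_)).mono (by simp)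
      simp
  | succ m ih =>
      intro B hB
      have h0 : ExpBound (fun μ : ℂ => NormedSpace.exp (μ • B 0)) c :=
        (ExpBound.expo hone (B 0)).mono (hB 0)
      have ht := h0.mul (ih (fun i => B i.succ) (fun i => hB i.succ))
      refine (ht.congr fun μ => ?_).mono ?_
      · rw [List.ofFn_succ, List.prod_cons]
      · push_cast; nlinarith [hc]

theorem suzukiP_mem (k : ℕ) (hk : 2 ≤ k) : suzukiP k ∈ Set.Icc (3⁻¹ : ℝ) 2⁻¹ := by
  have hk3 : (3 : ℝ) ≤ 2 * (k : ℝ) - 1 := by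
    have : (2 : ℝ) ≤ (k : ℝ) := by exact_mod_cast hk
    linarith
  set x : ℝ := (1 : ℝ) / (2 * (k : ℝ) - 1) with hx
  have hx0 : 0 < x := by positivity
  have hx2 : x ≤ 1 / 2 := by
    rw [hx, div_le_div_iff₀ (by linarith) (by norm_num)]
    linarith
  have h4half : (4 : ℝ) ^ ((1 : ℝ) / 2) = 2 := by
    rw [show (4 : ℝ) = 2 ^ (2 : ℕ) by norm_num, ← Real.rpow_natCast 2 2, ← Real.rpow_mul
      (by norm_num)]
    norm_num
  have hub : (4 : ℝ) ^ x ≤ 2 := by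
    rw [← h4half]
    exact Real.rpow_le_rpow_of_exponent_le (by norm_num) hx2
  have hlb : (1 : ℝ) ≤ (4 : ℝ) ^ x := by
    rw [show (1 : ℝ) = (4 : ℝ) ^ (0 : ℝ) by simp]
    exact Real.rpow_le_rpow_of_exponent_le (by norm_num) hx0.le
  constructor
  · rw [suzukiP, ← hx, le_one_div (by norm_num) (by linarith)]
    linarith
  · rw [suzukiP, ← hx, one_div_le (by linarith) (by norm_num)]
    linarith

end Aux

section Uniqueness

set_option linter.unusedSectionVars false

open Filter

variable {A : Type*} [NormedAddCommGroup A] [NormedSpace ℂ A] [CompleteSpace A]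

theorem coeff_eq_zero {E : ℕ → A} (hE : ∀ μ : ℂ, HasSum (fun j : ℕ => μ ^ j • E j) 0) :
    ∀ j, E j = 0 := by
  set p : FormalMultilinearSeries ℂ ℂ A :=
    fun n => ContinuousMultilinearMap.mkPiRing ℂ (Fin n) (E n) with hp
  have happ : ∀ (n : ℕ) (y : ℂ), (p n fun _ => y) = y ^ n • E n := by
    intro n y
    simp [hp, ContinuousMultilinearMap.mkPiRing_apply]
  have hball : HasFPowerSeriesOnBall (fun _ : ℂ => (0 : A)) p 0 1 := by
    refine ⟨?_, by norm_num, fun {y} _ => ?_⟩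
    · refine p.le_radius_of_tendsto (l := 0) ?_
      have h1 : Tendsto (fun n : ℕ => ‖(1 : ℂ) ^ n • E n‖) atTop (nhds 0) := by
        simpa using (hE 1).summable.tendsto_atTop_zero.norm
      refine h1.congr fun n => ?_
      simp only [hp, one_pow, one_smul, ContinuousMultilinearMap.norm_mkPiRing,
        NNReal.coe_one, mul_one]
    · have := hE y
      simp only [happ]
      simpa using this
  have hzero : p = 0 := hball.hasFPowerSeriesAt.eq_zero
  intro j
  have := happ j 1
  rw [hzero] at this
  simpa using this.symm

end Uniqueness

section Suzuki

variable {n L : ℕ}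

theorem matrix_norm_one_le : ‖(1 : Matrix (Fin n) (Fin n) ℂ)‖ ≤ 1 := by
  rw [Matrix.cstar_norm_def, map_one, ContinuousLinearMap.one_def]
  exact ContinuousLinearMap.norm_id_le

theorem exp_smul_mul_exp_smul (B : Matrix (Fin n) (Fin n) ℂ) (a b : ℂ) :
    NormedSpace.exp (a • B) * NormedSpace.exp (b • B) = NormedSpace.exp ((a + b) • B) := by
  rw [add_smul]
  exact (Matrix.exp_add_of_commute _ _ (((Commute.refl B).smul_left a).smul_right b)).symm

theorem suzuki_one_matrix (H : Fin 1 → Matrix (Fin n) (Fin n) ℂ) :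
    ∀ (k : ℕ) (lam : ℂ), suzuki H (k + 1) lam = NormedSpace.exp (lam • H 0) := by
  intro k
  induction k with
  | zero =>
      intro lam
      show (List.ofFn fun i : Fin 1 => NormedSpace.exp ((lam / 2) • H i)).prod * _ = _
      simp only [List.ofFn_succ, List.ofFn_zero, List.prod_cons, List.prod_nil, mul_one,
        Fin.rev_zero]
      rw [show (Fin.last 0) = (0 : Fin 1) by ext; rfl, exp_smul_mul_exp_smul, add_halves]
  | succ k ih =>
      intro lam
      show suzuki H (k + 1) _ ^ 2 * suzuki H (k + 1) _ * suzuki H (k + 1) _ ^ 2 = _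
      simp only [ih, sq, exp_smul_mul_exp_smul]
      congr 1
      congr 1
      ring

theorem expBound_suzuki (hL : 1 ≤ L) (H : Fin L → Matrix (Fin n) (Fin n) ℂ)
    (Λ : ℝ) (hΛ0 : 0 ≤ Λ) (hΛ : ∀ i, ‖H i‖ ≤ Λ) (k : ℕ) :
    ExpBound (fun μ => suzuki H (k + 1) μ) ((2 * 5 ^ k * ((L : ℝ) - 1) + 1) * Λ) := by
  rcases eq_or_lt_of_le hL with hL1 | hL2
  · -- L = 1
    subst hL1
    have h := (ExpBound.expo matrix_norm_one_le (H 0)).mono (hΛ 0)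
    refine (h.congr fun μ => (suzuki_one_matrix H k μ).symm).mono (le_of_eq ?_)
    norm_num
  · -- 2 ≤ L
    have hL2' : (2 : ℝ) ≤ (L : ℝ) := by exact_mod_cast hL2
    induction k with
    | zero =>
        have hB : ∀ (B : Fin L → Matrix (Fin n) (Fin n) ℂ), (∀ i, ‖B i‖ ≤ Λ) →
            ExpBound (fun μ : ℂ =>
              (List.ofFn fun i : Fin L => NormedSpace.exp ((μ / 2) • B i)).prod)
              ((L : ℝ) * (Λ / 2)) := by
          intro B hple
          have h := expBound_list_prod matrix_norm_one_le (by positivity : (0:ℝ) ≤ Λ / 2) L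
            (fun i => (2 : ℂ)⁻¹ • B i) (fun i => by
              rw [norm_smul, norm_inv]
              have : ‖(2 : ℂ)‖ = 2 := by norm_num
              rw [this]
              have := hple i
              rw [inv_mul_eq_div]
              linarith)
          refine h.congr fun μ => ?_
          congr 1
          refine congrArg _ (funext fun i => ?_)
          rw [smul_smul, mul_comm, ← smul_smul, smul_smul, inv_mul_eq_div]
        have h1 := hB H hΛ
        have h2 := hB (fun i => H i.rev) (fun i => hΛ i.rev)
        refine ((h1.mul h2).congr fun μ => rfl).mono ?_
        have h5 : (5 : ℝ) ^ (0 : ℕ) = 1 := pow_zero 5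
        nlinarith [hΛ0, hL2']
    | succ k ihk =>
        have ih := ihk
        set a : ℝ := (2 * 5 ^ k * ((L : ℝ) - 1) + 1) * Λ with ha
        have hp := suzukiP_mem (k + 2) (by omega)
        set p : ℝ := suzukiP (k + 2) with hpdef
        have hpc : ‖(p : ℂ)‖ = p := by
          rw [Complex.norm_real, Real.norm_eq_abs, abs_of_pos (lt_of_lt_of_le (by norm_num) hp.1)]
        have hqc : ‖1 - 4 * (p : ℂ)‖ ≤ 1 := by
          have : (1 - 4 * (p : ℂ)) = (((1 - 4 * p : ℝ)) : ℂ) := by push_cast; ring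
          rw [this, Complex.norm_real, Real.norm_eq_abs, abs_le]
          constructor <;> [linarith [hp.2]; linarith [hp.1]]
        have h1 := ih.comp_mul (p : ℂ)
        have h2 := ih.comp_mul (1 - 4 * (p : ℂ))
        have hsq := h1.mul h1
        have htot := (hsq.mul h2).mul hsq
        refine (htot.congr fun μ => ?_).mono ?_
        · show _ = suzuki H (k + 2) μ
          show _ = suzuki H (k + 1) _ ^ 2 * suzuki H (k + 1) _ * suzuki H (k + 1) _ ^ 2
          rw [sq]
        · have ha0 : 0 ≤ a := ih.1
          have hpa : ‖(p : ℂ)‖ * a ≤ a / 2 := by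
            rw [hpc]
            nlinarith [hp.2, ha0]
          have hqa : ‖1 - 4 * (p : ℂ)‖ * a ≤ a := by
            nlinarith [hqc, ha0]
          have h5 : (1 : ℝ) ≤ 5 ^ k := one_le_pow₀ (by norm_num)
          have hprod : (1 : ℝ) ≤ 5 ^ k * ((L : ℝ) - 1) := by nlinarith [h5, hL2']
          have hfin : 3 * a ≤ (2 * 5 ^ (k + 1) * ((L : ℝ) - 1) + 1) * Λ := by
            rw [ha, pow_succ]
            nlinarith [mul_nonneg hΛ0
              (by linarith : (0:ℝ) ≤ 4 * (5 ^ k * ((L : ℝ) - 1)) - 2)]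
          linarith

end Suzuki

/-- Let `H_1, …, H_L` (`L ≥ 1`) be Hermitian `n×n` complex matrices with
`Λ := max_i ‖H_i‖` (operator norm), let `k ≥ 1` and `λ ∈ ℂ`, and let
`S^{(2k)}(λ/2) = Σ_{j=0}^∞ λ^j C_j` be the power series (in `λ`) of the `(2k)`-th order
Trotter–Suzuki formula evaluated at `λ/2`. Then the Taylor remainder beyond order `2k`
satisfies `‖R_{2k}(S^{(2k)}(λ/2))‖ ≤ ((|λ|[2·5^{k−1}(L−1)+1]Λ/2)^{2k+1} / (2k+1)!) ·
exp(|λ|[2·5^{k−1}(L−1)+1]Λ/2)`. -/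
theorem opNorm_remainder_suzuki_half_le {n L : ℕ} (hL : 1 ≤ L)
    (H : Fin L → Matrix (Fin n) (Fin n) ℂ) (hH : ∀ i, (H i).IsHermitian)
    (Λ : ℝ) (hΛ : IsGreatest (Set.range fun i => ‖H i‖) Λ)
    (k : ℕ) (hk : 1 ≤ k) (lam : ℂ)
    (C : ℕ → Matrix (Fin n) (Fin n) ℂ)
    (hC : ∀ μ : ℂ, HasSum (fun j : ℕ => μ ^ j • C j) (suzuki H k (μ / 2))) :
    ‖∑' j : ℕ, lam ^ (2 * k + 1 + j) • C (2 * k + 1 + j)‖ ≤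
      (‖lam‖ * (2 * 5 ^ (k - 1) * ((L : ℝ) - 1) + 1) * Λ / 2) ^ (2 * k + 1) /
          ((2 * k + 1)! : ℝ) *
        Real.exp (‖lam‖ * (2 * 5 ^ (k - 1) * ((L : ℝ) - 1) + 1) * Λ / 2) := by
  obtain ⟨k', rfl⟩ : ∃ k', k = k' + 1 := ⟨k - 1, by omega⟩
  obtain ⟨i₀, hi₀⟩ := hΛ.1
  have hΛ0 : 0 ≤ Λ := hi₀ ▸ norm_nonneg _
  have hΛle : ∀ i, ‖H i‖ ≤ Λ := fun i => hΛ.2 ⟨i, rfl⟩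
  have hS := expBound_suzuki hL H Λ hΛ0 hΛle k'
  have hhalf := hS.comp_mul ((2 : ℂ)⁻¹)
  set aR : ℝ := (2 * 5 ^ k' * ((L : ℝ) - 1) + 1) * Λ / 2 with haR
  have habs2 : ‖(2 : ℂ)⁻¹‖ * ((2 * 5 ^ k' * ((L : ℝ) - 1) + 1) * Λ) = aR := by
    rw [norm_inv, Complex.norm_two, haR]; ring
  have hEB : ExpBound (fun μ : ℂ => suzuki H (k' + 1) (μ / 2)) aR := by
    rw [← habs2]
    exact hhalf.congr fun μ => by rw [inv_mul_eq_div]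
  obtain ⟨haR0, D, hDs, hDle⟩ := hEB
  have hCD : ∀ j, C j = D j := by
    have h0 : ∀ μ : ℂ, HasSum (fun j : ℕ => μ ^ j • (C j - D j)) 0 := by
      intro μ
      have := (hC μ).sub (hDs μ)
      simpa [smul_sub] using this
    exact fun j => sub_eq_zero.mp (coeff_eq_zero h0 j)
  have hCle : ∀ j, ‖C j‖ ≤ aR ^ j / (j ! : ℝ) := fun j => (hCD j) ▸ hDle j
  clear_value aR
  set N : ℕ := 2 * (k' + 1) + 1 with hN
  clear_value N
  set r : ℝ := ‖lam‖ * aR with hr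
  clear_value r
  have hub : ∀ j : ℕ, ‖lam ^ (N + j) • C (N + j)‖ ≤ r ^ N / (N ! : ℝ) * (r ^ j / (j ! : ℝ)) := by
    intro j
    rw [norm_smul, norm_pow]
    have h1 : ‖lam‖ ^ (N + j) * ‖C (N + j)‖
        ≤ ‖lam‖ ^ (N + j) * (aR ^ (N + j) / (((N + j))! : ℝ)) :=
      mul_le_mul_of_nonneg_left (hCle _) (by positivity)
    refine h1.trans ?_
    have heq : ‖lam‖ ^ (N + j) * (aR ^ (N + j) / (((N + j))! : ℝ))
        = r ^ N * r ^ j / (((N + j))! : ℝ) := by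
      rw [hr]
      ring
    rw [heq]
    have hfac : ((N)! : ℝ) * (j ! : ℝ) ≤ (((N + j))! : ℝ) := by
      exact_mod_cast Nat.le_of_dvd (Nat.factorial_pos _)
        (Nat.factorial_mul_factorial_dvd_factorial_add N j)
    calc r ^ N * r ^ j / (((N + j))! : ℝ) ≤ r ^ N * r ^ j / ((N ! : ℝ) * (j ! : ℝ)) := by
          have hr0 : 0 ≤ r := by
            rw [hr]; exact mul_nonneg (norm_nonneg _) haR0
          gcongr
      _ = r ^ N / (N ! : ℝ) * (r ^ j / (j ! : ℝ)) := by ring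
  have hsum_ub : Summable (fun j : ℕ => r ^ N / (N ! : ℝ) * (r ^ j / (j ! : ℝ))) :=
    (Real.summable_pow_div_factorial r).mul_left _
  have hsnorm : Summable fun j : ℕ => ‖lam ^ (N + j) • C (N + j)‖ :=
    Summable.of_nonneg_of_le (fun _ => norm_nonneg _) hub hsum_ub
  have hexp : ∑' j : ℕ, r ^ j / (j ! : ℝ) = Real.exp r := by
    rw [Real.exp_eq_exp_ℝ, NormedSpace.exp_eq_tsum_div]
  have hmain : ‖∑' j : ℕ, lam ^ (N + j) • C (N + j)‖ ≤ r ^ N / (N ! : ℝ) * Real.exp r :=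
    calc ‖∑' j : ℕ, lam ^ (N + j) • C (N + j)‖
        ≤ ∑' j : ℕ, ‖lam ^ (N + j) • C (N + j)‖ := norm_tsum_le_tsum_norm hsnorm
      _ ≤ ∑' j : ℕ, r ^ N / (N ! : ℝ) * (r ^ j / (j ! : ℝ)) := Summable.tsum_le_tsum hub hsnorm hsum_ub
      _ = r ^ N / (N ! : ℝ) * ∑' j : ℕ, r ^ j / (j ! : ℝ) := tsum_mul_left
      _ = r ^ N / (N ! : ℝ) * Real.exp r := by rw [hexp]
  have hbase : ‖lam‖ * (2 * 5 ^ (k' + 1 - 1) * ((L : ℝ) - 1) + 1) * Λ / 2 = r := by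
    rw [hr, haR]
    simp only [Nat.add_sub_cancel]
    ring
  rw [hbase]
  exact hmain
end

section
/- Let H_1, …, H_L be Hermitian n×n complex matrices with Λ := max_{1≤i≤L} ‖H_i‖, let k ≥ 1, λ ∈ ℂ, κ := 2·5^{k−1}, and let D(λ/2) := R_{2k}(exp(λ Σ_{i=1}^L H_i / 2)) − R_{2k}(S^{(2k)}(λ/2)) be the difference of the Taylor remainders beyond order 2k of the exact exponential and of the (2k)-th order Trotter–Suzuki formula. Then ‖D(λ/2)‖ ≤ 2 (κ|λ|LΛ/2)^{2k+1} / (2k+1)! · exp(κ|λ|LΛ/2). -/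
open scoped Nat Matrix.Norms.L2Operator
open scoped Matrix

namespace TrotterAux

variable {n : ℕ}

/-- `A` is a coefficient sequence for `F` with weight `w`. -/
def IsExpCoeff (A : ℕ → Matrix (Fin n) (Fin n) ℂ) (F : ℂ → Matrix (Fin n) (Fin n) ℂ)
    (w : ℝ) : Prop :=
  (∀ μ : ℂ, HasSum (fun j : ℕ => μ ^ j • A j) (F μ)) ∧ ∀ j : ℕ, ‖A j‖ ≤ w ^ j / (j)!

theorem IsExpCoeff.summable_norm {A F w} (h : IsExpCoeff (n := n) A F w) (μ : ℂ) :
    Summable fun j : ℕ => ‖μ ^ j • A j‖ := by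
  refine Summable.of_nonneg_of_le (fun _ => norm_nonneg _) (fun j => ?_)
    (Real.summable_pow_div_factorial (‖μ‖ * w))
  rw [norm_smul, norm_pow, mul_pow, mul_div_assoc]
  exact mul_le_mul_of_nonneg_left (h.2 j) (by positivity)

theorem IsExpCoeff.mono {A F w w'} (h : IsExpCoeff (n := n) A F w) (hw : 0 ≤ w)
    (hw' : w ≤ w') : IsExpCoeff A F w' := by
  refine ⟨h.1, fun j => (h.2 j).trans ?_⟩
  gcongr

theorem isExpCoeff_exp (M : Matrix (Fin n) (Fin n) ℂ) :
    IsExpCoeff (fun j => ((j)! : ℂ)⁻¹ • M ^ j) (fun μ => NormedSpace.exp (μ • M)) ‖M‖ := by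
  constructor
  · intro μ
    have h := NormedSpace.expSeries_hasSum_exp (𝕂 := ℂ) (μ • M)
    simp only [NormedSpace.expSeries_apply_eq] at h
    convert h using 2 with j
    · rfl
    · rfl
    rw [smul_pow, smul_comm]
  · intro j
    rw [norm_smul, norm_inv]
    rcases Nat.eq_zero_or_pos j with hj | hj
    · subst hj
      simp only [pow_zero, Nat.factorial_zero]
      have h1 : ‖(1 : Matrix (Fin n) (Fin n) ℂ)‖ ≤ 1 := by
        rcases Nat.eq_zero_or_pos n with h | h
        · subst h; simp [Subsingleton.elim (1 : Matrix (Fin 0) (Fin 0) ℂ) 0]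
        · have : Nonempty (Fin n) := ⟨⟨0, h⟩⟩
          rw [CStarRing.norm_one]
      simpa using h1
    · have hpow : ‖M ^ j‖ ≤ ‖M‖ ^ j := norm_pow_le' M hj
      have hn : ‖((j)! : ℂ)‖ = ((j)! : ℝ) := by
        simp [Complex.norm_natCast]
      rw [hn, inv_mul_le_iff₀ (by positivity)]
      calc ‖M ^ j‖ ≤ ‖M‖ ^ j := hpow
        _ = (j)! * (‖M‖ ^ j / (j)!) := by field_simp

theorem IsExpCoeff.comp {A F w} (h : IsExpCoeff (n := n) A F w) (c : ℂ) :
    IsExpCoeff (fun j => c ^ j • A j) (fun μ => F (c * μ)) (‖c‖ * w) := by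
  constructor
  · intro μ
    have := h.1 (c * μ)
    convert this using 2 with j
    rw [mul_pow, mul_comm (c ^ j), mul_smul]
  · intro j
    rw [norm_smul, norm_pow, mul_pow, mul_div_assoc]
    exact mul_le_mul_of_nonneg_left (h.2 j) (by positivity)

theorem IsExpCoeff.mul {A B F G w v} (hA : IsExpCoeff (n := n) A F w)
    (hB : IsExpCoeff B G v) (hw : 0 ≤ w) (hv : 0 ≤ v) :
    IsExpCoeff (fun j => ∑ p ∈ Finset.range (j + 1), A p * B (j - p))
      (fun μ => F μ * G μ) (w + v) := by
  constructor
  · intro μ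
    have h1 := hA.summable_norm μ
    have h2 := hB.summable_norm μ
    have H := hasSum_sum_range_mul_of_summable_norm h1 h2
    rw [(hA.1 μ).tsum_eq, (hB.1 μ).tsum_eq] at H
    convert H using 2 with j
    · rfl
    · rfl
    rw [Finset.smul_sum]
    refine Finset.sum_congr rfl fun p hp => ?_
    have hpj : p ≤ j := Nat.lt_succ_iff.mp (Finset.mem_range.mp hp)
    rw [smul_mul_smul_comm, ← pow_add, Nat.add_sub_cancel' hpj]
  · intro j
    calc ‖∑ p ∈ Finset.range (j + 1), A p * B (j - p)‖
        ≤ ∑ p ∈ Finset.range (j + 1), ‖A p * B (j - p)‖ := norm_sum_le _ _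
      _ ≤ ∑ p ∈ Finset.range (j + 1), (w ^ p / (p)!) * (v ^ (j - p) / ((j - p))!) := by
          refine Finset.sum_le_sum fun p _ => ?_
          exact le_trans (norm_mul_le _ _)
            (mul_le_mul (hA.2 p) (hB.2 (j - p)) (norm_nonneg _) (by positivity))
      _ = (w + v) ^ j / (j)! := by
          rw [add_pow, Finset.sum_div]
          refine Finset.sum_congr rfl fun p hp => ?_
          have hpj : p ≤ j := Nat.lt_succ_iff.mp (Finset.mem_range.mp hp)
          have hfac : ((j.choose p : ℝ)) * (p)! * ((j - p))! = ((j)! : ℝ) := by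
            exact_mod_cast congrArg (Nat.cast : ℕ → ℝ)
              (Nat.choose_mul_factorial_mul_factorial hpj)
          have hp0 : (0 : ℝ) < (p)! := by positivity
          have hq0 : (0 : ℝ) < ((j - p))! := by positivity
          field_simp
          rw [← hfac]
          ring

theorem isExpCoeff_one :
    IsExpCoeff (n := n) (fun j => if j = 0 then 1 else 0) (fun _ => 1) 0 := by
  constructor
  · intro μ
    have h0 := hasSum_single (f := fun j : ℕ =>
        μ ^ j • (if j = 0 then (1 : Matrix (Fin n) (Fin n) ℂ) else 0)) 0
      (fun b hb => by simp [hb])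
    simpa using h0
  · intro j
    rcases Nat.eq_zero_or_pos j with hj | hj
    · subst hj
      simp only [reduceIte, pow_zero, Nat.factorial_zero, Nat.cast_one, div_one]
      rcases Nat.eq_zero_or_pos n with h | h
      · subst h; simp [Subsingleton.elim (1 : Matrix (Fin 0) (Fin 0) ℂ) 0]
      · have : Nonempty (Fin n) := ⟨⟨0, h⟩⟩
        rw [CStarRing.norm_one]
    · simp [Nat.pos_iff_ne_zero.mp hj, zero_pow (Nat.pos_iff_ne_zero.mp hj)]

theorem isExpCoeff_listProd (l : List ((ℂ → Matrix (Fin n) (Fin n) ℂ) × ℝ))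
    (h : ∀ p ∈ l, 0 ≤ p.2 ∧ ∃ A, IsExpCoeff A p.1 p.2) :
    (0 ≤ (l.map Prod.snd).sum) ∧
      ∃ A, IsExpCoeff A (fun μ => (l.map fun p => p.1 μ).prod) ((l.map Prod.snd).sum) := by
  induction l with
  | nil =>
    refine ⟨le_refl _, ?_⟩
    simpa using ⟨_, isExpCoeff_one (n := n)⟩
  | cons hd tl ih =>
    obtain ⟨hw, A, hA⟩ := h hd (List.mem_cons_self)
    obtain ⟨hv, B, hB⟩ := ih fun p hp => h p (List.mem_cons_of_mem _ hp)
    refine ⟨by simpa using add_nonneg hw hv, ?_⟩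
    exact ⟨_, by simpa using hA.mul hB hw hv⟩

theorem suzukiP_mem (m : ℕ) (hm : 2 ≤ m) :
    suzukiP m ∈ Set.Icc (1 / 3 : ℝ) (1 / 2) := by
  have hm3 : (3 : ℝ) ≤ 2 * (m : ℝ) - 1 := by
    have : (2 : ℝ) ≤ (m : ℝ) := by exact_mod_cast hm
    linarith
  set x : ℝ := (1 : ℝ) / (2 * (m : ℝ) - 1) with hx
  have hx0 : 0 < x := by positivity
  have hx3 : x ≤ 1 / 3 := by
    rw [hx, div_le_div_iff₀ (by linarith) (by norm_num)]
    linarith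
  have h1 : (1 : ℝ) ≤ (4 : ℝ) ^ x := by
    apply Real.one_le_rpow (by norm_num) hx0.le
  have h2 : (4 : ℝ) ^ x ≤ 2 := by
    have e : ((4 : ℝ)) ^ ((1 : ℝ) / 2) = 2 := by
      rw [show (4 : ℝ) = (2 : ℝ) ^ (2 : ℕ) by norm_num, ← Real.rpow_natCast 2 2,
        ← Real.rpow_mul (by norm_num)]
      norm_num
    calc (4 : ℝ) ^ x ≤ (4 : ℝ) ^ ((1 : ℝ) / 2) := by
          apply Real.rpow_le_rpow_of_exponent_le (by norm_num)
          linarith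
      _ = 2 := e
  have hd : (2 : ℝ) ≤ 4 - (4 : ℝ) ^ x := by linarith
  have hd' : 4 - (4 : ℝ) ^ x ≤ 3 := by linarith
  constructor
  · rw [suzukiP, ← hx]
    rw [div_le_div_iff₀ (by norm_num) (by linarith)]
    linarith
  · rw [suzukiP, ← hx]
    rw [div_le_div_iff₀ (by linarith) (by norm_num)]
    linarith

theorem isExpCoeff_expHalf (M : Matrix (Fin n) (Fin n) ℂ) :
    IsExpCoeff (fun j => ((2 : ℂ)⁻¹) ^ j • (((j)! : ℂ)⁻¹ • M ^ j))
      (fun μ => NormedSpace.exp ((μ / 2) • M)) (‖M‖ / 2) := by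
  have h := (isExpCoeff_exp M).comp ((2 : ℂ)⁻¹)
  have e2 : ‖(2 : ℂ)⁻¹‖ * ‖M‖ = ‖M‖ / 2 := by
    have : ‖(2 : ℂ)⁻¹‖ = 2⁻¹ := by norm_num
    rw [this]; ring
  rw [e2] at h
  convert h using 2 with μ
  congr 1
  ring

theorem suzuki_one_isExpCoeff {L : ℕ} (H : Fin L → Matrix (Fin n) (Fin n) ℂ) (Λ : ℝ)
    (hΛ0 : 0 ≤ Λ) (hΛ : ∀ i, ‖H i‖ ≤ Λ) :
    ∃ A, IsExpCoeff A (suzuki H 1) ((L : ℝ) * Λ) := by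
  have half : ∀ (G : Fin L → Matrix (Fin n) (Fin n) ℂ), (∀ i, ‖G i‖ ≤ Λ) →
      ∃ A, IsExpCoeff A
        (fun μ => (List.ofFn fun i : Fin L => NormedSpace.exp ((μ / 2) • G i)).prod)
        ((L : ℝ) * Λ / 2) := by
    intro G hG
    set l : List ((ℂ → Matrix (Fin n) (Fin n) ℂ) × ℝ) :=
      List.ofFn (fun i : Fin L =>
        ((fun μ => NormedSpace.exp ((μ / 2) • G i)), ‖G i‖ / 2)) with hl
    have hmem : ∀ p ∈ l, 0 ≤ p.2 ∧ ∃ A, IsExpCoeff A p.1 p.2 := by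
      intro p hp
      rw [hl, List.mem_ofFn] at hp
      obtain ⟨i, rfl⟩ := hp
      exact ⟨by positivity, _, isExpCoeff_expHalf (G i)⟩
    obtain ⟨hs, A, hA⟩ := isExpCoeff_listProd l hmem
    have hfun : (fun μ => (l.map fun p => p.1 μ).prod)
        = fun μ => (List.ofFn fun i : Fin L => NormedSpace.exp ((μ / 2) • G i)).prod := by
      funext μ
      rw [hl, List.map_ofFn]
      rfl
    have hwt : (l.map Prod.snd).sum ≤ (L : ℝ) * Λ / 2 := by
      rw [hl, List.map_ofFn]
      have : (List.ofFn fun i : Fin L => ‖G i‖ / 2).sum = ∑ i, ‖G i‖ / 2 := by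
        rw [List.sum_ofFn]
      rw [show ((fun p : (ℂ → Matrix (Fin n) (Fin n) ℂ) × ℝ => p.2) ∘ fun i =>
          ((fun μ => NormedSpace.exp ((μ / 2) • G i)), ‖G i‖ / 2))
          = fun i : Fin L => ‖G i‖ / 2 from rfl, this]
      calc (∑ i, ‖G i‖ / 2) ≤ ∑ _i : Fin L, Λ / 2 := by
            exact Finset.sum_le_sum fun i _ => by linarith [hG i]
        _ = (L : ℝ) * Λ / 2 := by
            rw [Finset.sum_const, Finset.card_univ, Fintype.card_fin, nsmul_eq_mul]
            ring
    rw [hfun] at hA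
    exact ⟨A, hA.mono hs hwt⟩
  obtain ⟨A1, h1⟩ := half H hΛ
  obtain ⟨A2, h2⟩ := half (fun i => H i.rev) (fun i => hΛ i.rev)
  have hm := h1.mul h2 (by positivity) (by positivity)
  have hfun : suzuki H 1 = fun lam =>
      (List.ofFn fun i : Fin L => NormedSpace.exp ((lam / 2) • H i)).prod *
        (List.ofFn fun i : Fin L => NormedSpace.exp ((lam / 2) • H i.rev)).prod := by
    funext lam
    simp [suzuki]
  have heq : (L : ℝ) * Λ / 2 + (L : ℝ) * Λ / 2 = (L : ℝ) * Λ := by ring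
  rw [heq] at hm
  rw [← hfun] at hm
  exact ⟨_, hm⟩

theorem suzuki_isExpCoeff {L : ℕ} (H : Fin L → Matrix (Fin n) (Fin n) ℂ) (Λ : ℝ)
    (hΛ0 : 0 ≤ Λ) (hΛ : ∀ i, ‖H i‖ ≤ Λ) :
    ∀ k : ℕ, ∃ A, IsExpCoeff A (suzuki H (k + 1)) ((5 : ℝ) ^ k * L * Λ) := by
  intro k
  induction k with
  | zero =>
    obtain ⟨A, hA⟩ := suzuki_one_isExpCoeff H Λ hΛ0 hΛ
    exact ⟨A, by simpa using hA⟩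
  | succ k ih =>
    obtain ⟨A, hA⟩ := ih
    set w : ℝ := (5 : ℝ) ^ k * L * Λ with hw
    have hw0 : 0 ≤ w := by positivity
    have hp := suzukiP_mem (k + 2) (by omega)
    set p : ℝ := suzukiP (k + 2) with hpdef
    have hpn : ‖(p : ℂ)‖ ≤ 1 := by
      rw [Complex.norm_real, Real.norm_eq_abs]
      rw [abs_of_nonneg (by linarith [hp.1])]
      linarith [hp.2]
    have hqn : ‖(1 - 4 * (p : ℂ) : ℂ)‖ ≤ 1 := by
      have : ((1 - 4 * p : ℝ) : ℂ) = 1 - 4 * (p : ℂ) := by push_cast; ring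
      rw [← this, Complex.norm_real, Real.norm_eq_abs, abs_le]
      constructor <;> [linarith [hp.2]; linarith [hp.1]]
    -- scaled versions
    have hP := hA.comp (p : ℂ)
    have hQ := hA.comp (1 - 4 * (p : ℂ))
    have hP' := hP.mono (by positivity) (mul_le_mul_of_nonneg_right hpn hw0)
    have hQ' := hQ.mono (by positivity) (mul_le_mul_of_nonneg_right hqn hw0)
    rw [one_mul] at hP' hQ'
    have h2 := hP'.mul hP' hw0 hw0
    have h3 := h2.mul hQ' (by positivity) hw0
    have h4 := h3.mul hP' (by positivity) hw0
    have h5 := h4.mul hP' (by positivity) hw0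
    have hfun : suzuki H (k + 2) = fun lam =>
        (((suzuki H (k + 1) ((p : ℂ) * lam) * suzuki H (k + 1) ((p : ℂ) * lam)) *
            suzuki H (k + 1) ((1 - 4 * (p : ℂ)) * lam)) *
          suzuki H (k + 1) ((p : ℂ) * lam)) * suzuki H (k + 1) ((p : ℂ) * lam) := by
      funext lam
      show suzuki H (k + 2) lam = _
      rw [suzuki, pow_two, ← hpdef, ← mul_assoc]
    have hwt : w + w + w + w + w = (5 : ℝ) ^ (k + 1) * L * Λ := by
      rw [hw]; ring
    rw [hwt] at h5
    exact ⟨_, by rw [show (k + 1 + 1) = k + 2 from rfl, hfun]; exact h5⟩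

theorem coeff_unique (D : ℕ → Matrix (Fin n) (Fin n) ℂ)
    (h : ∀ μ : ℂ, HasSum (fun j : ℕ => μ ^ j • D j) 0) : ∀ j, D j = 0 := by
  set p : FormalMultilinearSeries ℂ ℂ (Matrix (Fin n) (Fin n) ℂ) :=
    fun j => ContinuousMultilinearMap.mkPiRing ℂ (Fin j) (D j) with hpdef
  have happ : ∀ (j : ℕ) (y : ℂ), (p j fun _ => y) = y ^ j • D j := by
    intro j y
    rw [hpdef]
    simp [ContinuousMultilinearMap.mkPiRing_apply]
  have hbound : ∃ K : ℝ, ∀ j, ‖D j‖ ≤ K := by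
    have hsum := (h 2).summable
    have ht : Filter.Tendsto (fun j => ‖(2 : ℂ) ^ j • D j‖) Filter.atTop (nhds 0) := by
      simpa using hsum.tendsto_atTop_zero.norm
    obtain ⟨K, hK⟩ := ht.bddAbove_range
    refine ⟨K, fun j => ?_⟩
    have h1 : ‖(2 : ℂ) ^ j • D j‖ ≤ K := hK ⟨j, rfl⟩
    have h2 : ‖(2 : ℂ) ^ j • D j‖ = 2 ^ j * ‖D j‖ := by
      rw [norm_smul, norm_pow]
      norm_num
    nlinarith [norm_nonneg (D j), one_le_pow₀ (by norm_num : (1:ℝ) ≤ 2) (n := j)]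
  obtain ⟨K, hK⟩ := hbound
  have hrad : 1 ≤ p.radius := by
    apply p.le_radius_of_bound K
    intro j
    rw [hpdef]
    simp only [ContinuousMultilinearMap.norm_mkPiRing, NNReal.coe_one, one_pow, mul_one]
    exact hK j
  have hball : HasFPowerSeriesOnBall (fun _ : ℂ => (0 : Matrix (Fin n) (Fin n) ℂ)) p 0 1 := by
    refine ⟨by exact_mod_cast hrad, one_pos, ?_⟩
    intro y _
    rw [show (fun j => p j fun _ => y) = fun j => y ^ j • D j from funext fun j => happ j y]
    exact h y
  have hzero : p = 0 := HasFPowerSeriesAt.eq_zero ⟨1, hball⟩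
  intro j
  have := happ j 1
  rw [hzero] at this
  simpa using this.symm

theorem tail_le (x : ℝ) (hx : 0 ≤ x) (m : ℕ) :
    ∑' j : ℕ, x ^ (m + j) / ((m + j))! ≤ x ^ m / (m)! * Real.exp x := by
  have hs : Summable (fun j : ℕ => x ^ (m + j) / ((m + j))!) := by
    exact (Real.summable_pow_div_factorial x).comp_injective (add_right_injective m)
  have hs2 : Summable (fun j : ℕ => x ^ m / (m)! * (x ^ j / (j)!)) :=
    (Real.summable_pow_div_factorial x).mul_left _
  have hterm : ∀ j : ℕ, x ^ (m + j) / ((m + j))! ≤ x ^ m / (m)! * (x ^ j / (j)!) := by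
    intro j
    rw [div_mul_div_comm, ← pow_add]
    apply div_le_div_of_nonneg_left (by positivity) (by positivity)
    exact_mod_cast Nat.le_of_dvd (Nat.factorial_pos _)
      (Nat.factorial_mul_factorial_dvd_factorial_add m j)
  calc ∑' j : ℕ, x ^ (m + j) / ((m + j))! ≤ ∑' j : ℕ, x ^ m / (m)! * (x ^ j / (j)!) :=
        Summable.tsum_le_tsum hterm hs hs2
    _ = x ^ m / (m)! * Real.exp x := by
        rw [tsum_mul_left, Real.exp_eq_exp_ℝ, NormedSpace.exp_eq_tsum_div]

end TrotterAux

/-- Let `H_1, …, H_L` (`L ≥ 1`) be Hermitian `n×n` complex matrices with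
`Λ := max_i ‖H_i‖`, let `k ≥ 1`, `λ ∈ ℂ` and `κ := 2·5^{k−1}`.  With
`D(λ/2) := R_{2k}(exp(λ Σ_i H_i / 2)) − R_{2k}(S^{(2k)}(λ/2))` the difference of the Taylor
remainders (in `λ`) beyond order `2k` of the exact exponential and of the `(2k)`-th order
Trotter–Suzuki formula (whose power series in `λ` has coefficients `C_j`), we have
`‖D(λ/2)‖ ≤ 2 (κ|λ|LΛ/2)^{2k+1} / (2k+1)! · exp(κ|λ|LΛ/2)`. -/
theorem opNorm_D_le {n L : ℕ} (hL : 1 ≤ L)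
    (H : Fin L → Matrix (Fin n) (Fin n) ℂ) (hH : ∀ i, (H i).IsHermitian)
    (Λ : ℝ) (hΛ : IsGreatest (Set.range fun i => ‖H i‖) Λ)
    (k : ℕ) (hk : 1 ≤ k) (lam : ℂ)
    (C : ℕ → Matrix (Fin n) (Fin n) ℂ)
    (hC : ∀ μ : ℂ, HasSum (fun j : ℕ => μ ^ j • C j) (suzuki H k (μ / 2))) :
    ‖(∑' j : ℕ, lam ^ (2 * k + 1 + j) •
          (((2 * k + 1 + j)! : ℂ)⁻¹ • ((2 : ℂ)⁻¹ • ∑ i, H i) ^ (2 * k + 1 + j))) -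
        ∑' j : ℕ, lam ^ (2 * k + 1 + j) • C (2 * k + 1 + j)‖ ≤
      2 * ((2 * 5 ^ (k - 1) : ℝ) * ‖lam‖ * L * Λ / 2) ^ (2 * k + 1) /
          ((2 * k + 1)! : ℝ) *
        Real.exp ((2 * 5 ^ (k - 1) : ℝ) * ‖lam‖ * L * Λ / 2) := by
  classical
  obtain ⟨i₀, hi₀⟩ := hΛ.1
  have hΛ0 : 0 ≤ Λ := hi₀ ▸ norm_nonneg _
  have hΛi : ∀ i, ‖H i‖ ≤ Λ := fun i => hΛ.2 ⟨i, rfl⟩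
  have habs : (0:ℝ) ≤ ‖lam‖ := norm_nonneg lam
  set m : ℕ := 2 * k + 1 with hmdef
  set x : ℝ := (2 * 5 ^ (k - 1) : ℝ) * ‖lam‖ * L * Λ / 2 with hxdef
  have hx0 : 0 ≤ x := by
    rw [hxdef]
    apply div_nonneg _ (by norm_num)
    exact mul_nonneg (mul_nonneg (mul_nonneg (by positivity) habs) (Nat.cast_nonneg L)) hΛ0
  set w : ℝ := (5 : ℝ) ^ (k - 1) * L * Λ with hwdef
  have hw0 : 0 ≤ w := by positivity
  obtain ⟨A, hA⟩ := TrotterAux.suzuki_isExpCoeff H Λ hΛ0 hΛi (k - 1)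
  have hk1 : k - 1 + 1 = k := Nat.succ_pred_eq_of_pos hk
  rw [hk1, ← hwdef] at hA
  have hA2 := hA.comp ((2 : ℂ)⁻¹)
  have hCA : ∀ j, C j = ((2 : ℂ)⁻¹) ^ j • A j := by
    have hdiff : ∀ μ : ℂ, HasSum (fun j : ℕ => μ ^ j • (C j - ((2 : ℂ)⁻¹) ^ j • A j)) 0 := by
      intro μ
      have h1 := hC μ
      have h2 : HasSum (fun j : ℕ => μ ^ j • ((2 : ℂ)⁻¹ ^ j • A j)) (suzuki H k (μ / 2)) := by
        have he : (2 : ℂ)⁻¹ * μ = μ / 2 := by ring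
        simpa [he] using hA2.1 μ
      have := h1.sub h2
      simpa [smul_sub] using this
    intro j
    have := TrotterAux.coeff_unique _ hdiff j
    exact sub_eq_zero.mp this
  have h2inv : ‖(2 : ℂ)⁻¹‖ = 2⁻¹ := by norm_num
  have hCnorm : ∀ j, ‖C j‖ ≤ (w / 2) ^ j / (j)! := by
    intro j
    rw [hCA j, norm_smul, norm_pow, h2inv]
    calc (2⁻¹ : ℝ) ^ j * ‖A j‖ ≤ (2⁻¹ : ℝ) ^ j * (w ^ j / (j)!) :=
          mul_le_mul_of_nonneg_left (hA.2 j) (by positivity)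
      _ = (w / 2) ^ j / (j)! := by rw [div_pow, inv_pow]; field_simp
  have hlam : ‖lam‖ = ‖lam‖ := rfl
  have hN : ‖((2 : ℂ)⁻¹ • ∑ i, H i)‖ ≤ (L : ℝ) * Λ / 2 := by
    rw [norm_smul, h2inv]
    have hsum : ‖∑ i, H i‖ ≤ (L : ℝ) * Λ := by
      calc ‖∑ i, H i‖ ≤ ∑ i, ‖H i‖ := norm_sum_le _ _
        _ ≤ ∑ _i : Fin L, Λ := Finset.sum_le_sum fun i _ => hΛi i
        _ = L * Λ := by rw [Finset.sum_const, Finset.card_univ, Fintype.card_fin, nsmul_eq_mul]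
    linarith
  have h5 : (1 : ℝ) ≤ 5 ^ (k - 1) := one_le_pow₀ (by norm_num)
  have hLΛ : (0:ℝ) ≤ (L:ℝ) * Λ := mul_nonneg (Nat.cast_nonneg L) hΛ0
  have hxeq : x = ‖lam‖ * w := by rw [hxdef, hwdef]; ring
  have hxkey1 : ‖lam‖ * ((L : ℝ) * Λ / 2) ≤ x := by
    rw [hlam, hxeq, hwdef]
    nlinarith [mul_nonneg habs hLΛ]
  have hxkey2 : ‖lam‖ * (w / 2) ≤ x := by
    rw [hlam, hxeq]
    nlinarith [mul_nonneg habs hw0]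
  have hb1 : ∀ j : ℕ, ‖lam ^ (m + j) •
      (((m + j)! : ℂ)⁻¹ • ((2 : ℂ)⁻¹ • ∑ i, H i) ^ (m + j))‖ ≤ x ^ (m + j) / ((m + j))! := by
    intro j
    rw [norm_smul, norm_smul, norm_pow, norm_inv, Complex.norm_natCast]
    have hpow : ‖((2 : ℂ)⁻¹ • ∑ i, H i) ^ (m + j)‖ ≤ ‖((2 : ℂ)⁻¹ • ∑ i, H i)‖ ^ (m + j) :=
      norm_pow_le' _ (by omega)
    have hc : ‖lam‖ * ‖((2 : ℂ)⁻¹ • ∑ i, H i)‖ ≤ x :=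
      le_trans (mul_le_mul_of_nonneg_left hN (norm_nonneg lam)) hxkey1
    calc ‖lam‖ ^ (m + j) * ((((m + j))! : ℝ)⁻¹ * ‖((2 : ℂ)⁻¹ • ∑ i, H i) ^ (m + j)‖)
        ≤ ‖lam‖ ^ (m + j) * ((((m + j))! : ℝ)⁻¹ * ‖((2 : ℂ)⁻¹ • ∑ i, H i)‖ ^ (m + j)) := by
          refine mul_le_mul_of_nonneg_left (mul_le_mul_of_nonneg_left hpow (by positivity))
            (by positivity)
      _ = (‖lam‖ * ‖((2 : ℂ)⁻¹ • ∑ i, H i)‖) ^ (m + j) / (((m + j))! : ℝ) := by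
          rw [mul_pow]; ring
      _ ≤ x ^ (m + j) / (((m + j))! : ℝ) := by
          gcongr
  have hb2 : ∀ j : ℕ, ‖lam ^ (m + j) • C (m + j)‖ ≤ x ^ (m + j) / ((m + j))! := by
    intro j
    rw [norm_smul, norm_pow]
    calc ‖lam‖ ^ (m + j) * ‖C (m + j)‖ ≤ ‖lam‖ ^ (m + j) * ((w / 2) ^ (m + j) / ((m + j))!) :=
          mul_le_mul_of_nonneg_left (hCnorm (m + j)) (by positivity)
      _ = (‖lam‖ * (w / 2)) ^ (m + j) / ((m + j))! := by rw [mul_pow]; ring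
      _ ≤ x ^ (m + j) / ((m + j))! := by
          gcongr
  have hsx : Summable (fun j : ℕ => x ^ (m + j) / ((m + j))!) :=
    (Real.summable_pow_div_factorial x).comp_injective (add_right_injective m)
  have hT1 : ‖∑' j : ℕ, lam ^ (m + j) •
      (((m + j)! : ℂ)⁻¹ • ((2 : ℂ)⁻¹ • ∑ i, H i) ^ (m + j))‖ ≤
      ∑' j : ℕ, x ^ (m + j) / ((m + j))! :=
    tsum_of_norm_bounded hsx.hasSum hb1
  have hT2 : ‖∑' j : ℕ, lam ^ (m + j) • C (m + j)‖ ≤ ∑' j : ℕ, x ^ (m + j) / ((m + j))! :=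
    tsum_of_norm_bounded hsx.hasSum hb2
  have htail := TrotterAux.tail_le x hx0 m
  have hgoal : ‖(∑' j : ℕ, lam ^ (m + j) •
      (((m + j)! : ℂ)⁻¹ • ((2 : ℂ)⁻¹ • ∑ i, H i) ^ (m + j))) -
      ∑' j : ℕ, lam ^ (m + j) • C (m + j)‖ ≤ 2 * (x ^ m / (m)! * Real.exp x) := by
    calc ‖(∑' j : ℕ, lam ^ (m + j) •
        (((m + j)! : ℂ)⁻¹ • ((2 : ℂ)⁻¹ • ∑ i, H i) ^ (m + j))) -
        ∑' j : ℕ, lam ^ (m + j) • C (m + j)‖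
        ≤ ‖∑' j : ℕ, lam ^ (m + j) •
            (((m + j)! : ℂ)⁻¹ • ((2 : ℂ)⁻¹ • ∑ i, H i) ^ (m + j))‖ +
          ‖∑' j : ℕ, lam ^ (m + j) • C (m + j)‖ := norm_sub_le _ _
      _ ≤ 2 * (x ^ m / (m)! * Real.exp x) := by linarith
  calc ‖(∑' j : ℕ, lam ^ (m + j) •
      (((m + j)! : ℂ)⁻¹ • ((2 : ℂ)⁻¹ • ∑ i, H i) ^ (m + j))) -
      ∑' j : ℕ, lam ^ (m + j) • C (m + j)‖ ≤ 2 * (x ^ m / (m)! * Real.exp x) := hgoal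
    _ = 2 * x ^ m / ((m)! : ℝ) * Real.exp x := by ring
end

section
/- Let H_1, …, H_L be Hermitian n×n complex matrices with Λ := max_{1≤i≤L} ‖H_i‖, let k ≥ 1, λ ∈ ℂ, κ := 2·5^{k−1}. Set V(λ/2) := exp(λ Σ_{i=1}^L H_i / 2) and D(λ/2) := R_{2k}(V(λ/2)) − R_{2k}(S^{(2k)}(λ/2)). Then the product of operator norms satisfies ‖V(λ/2)†‖ · ‖D(λ/2)‖ ≤ 2 (κ|λ|LΛ/2)^{2k+1} / (2k+1)! · exp([κ+1]|λ|LΛ/2). -/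
open scoped Nat Matrix.Norms.L2Operator
open scoped Matrix

namespace TrotterAux

variable {n : ℕ}

lemma norm_one_le : ‖(1 : Matrix (Fin n) (Fin n) ℂ)‖ ≤ 1 := by
  rw [Matrix.cstar_norm_def, map_one, ContinuousLinearMap.one_def]
  exact ContinuousLinearMap.norm_id_le

lemma norm_pow_le (A : Matrix (Fin n) (Fin n) ℂ) : ∀ j, ‖A ^ j‖ ≤ ‖A‖ ^ j
  | 0 => by simpa using norm_one_le
  | (j + 1) => by
      rw [pow_succ, pow_succ]
      exact (norm_mul_le _ _).trans
        (mul_le_mul_of_nonneg_right (norm_pow_le A j) (norm_nonneg _))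

/-- `f` has a power-series expansion whose coefficients are dominated by those of
`exp (a μ)`. -/
def ExpDom (f : ℂ → Matrix (Fin n) (Fin n) ℂ) (a : ℝ) : Prop :=
  ∃ c : ℕ → Matrix (Fin n) (Fin n) ℂ,
    (∀ j, ‖c j‖ ≤ a ^ j / j !) ∧ ∀ μ : ℂ, HasSum (fun j => μ ^ j • c j) (f μ)

lemma summable_norm_of_le {c : ℕ → Matrix (Fin n) (Fin n) ℂ} {a : ℝ}
    (hc : ∀ j, ‖c j‖ ≤ a ^ j / j !) (μ : ℂ) :
    Summable fun j => ‖μ ^ j • c j‖ := by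
  refine Summable.of_nonneg_of_le (fun j => norm_nonneg _) (fun j => ?_)
    (Real.summable_pow_div_factorial (‖μ‖ * a))
  rw [norm_smul, norm_pow]
  calc ‖μ‖ ^ j * ‖c j‖ ≤ ‖μ‖ ^ j * (a ^ j / j !) :=
        mul_le_mul_of_nonneg_left (hc j) (by positivity)
    _ = (‖μ‖ * a) ^ j / j ! := by rw [mul_pow]; ring

lemma ExpDom.congr {f g : ℂ → Matrix (Fin n) (Fin n) ℂ} {a : ℝ} (h : ExpDom f a)
    (hfg : ∀ μ, f μ = g μ) : ExpDom g a := by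
  obtain ⟨c, h1, h2⟩ := h
  exact ⟨c, h1, fun μ => (hfg μ) ▸ h2 μ⟩

lemma ExpDom.of_eq {f : ℂ → Matrix (Fin n) (Fin n) ℂ} {a b : ℝ} (h : ExpDom f a)
    (hab : a = b) : ExpDom f b := hab ▸ h

lemma ExpDom.mono {f : ℂ → Matrix (Fin n) (Fin n) ℂ} {a b : ℝ} (h : ExpDom f a)
    (ha : 0 ≤ a) (hab : a ≤ b) : ExpDom f b := by
  obtain ⟨c, h1, h2⟩ := h
  refine ⟨c, fun j => (h1 j).trans ?_, h2⟩
  gcongr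

lemma expDom_exp (A : Matrix (Fin n) (Fin n) ℂ) :
    ExpDom (fun μ => NormedSpace.exp (μ • A)) ‖A‖ := by
  refine ⟨fun j => ((j ! : ℂ))⁻¹ • A ^ j, fun j => ?_, fun μ => ?_⟩
  · rw [norm_smul, norm_inv]
    have h1 : ‖((j ! : ℂ))‖ = (j ! : ℝ) := by
      rw [Complex.norm_natCast]
    rw [h1, div_eq_inv_mul]
    exact mul_le_mul_of_nonneg_left (norm_pow_le A j) (by positivity)
  · have hs := NormedSpace.expSeries_summable' (𝕂 := ℂ) (μ • A)
    have h2 : NormedSpace.exp (μ • A) = ∑' j : ℕ, ((j ! : ℂ))⁻¹ • (μ • A) ^ j := by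
      rw [NormedSpace.exp_eq_tsum ℂ]
    have : (fun j => μ ^ j • (((j ! : ℂ))⁻¹ • A ^ j)) =
        fun j => ((j ! : ℂ))⁻¹ • (μ • A) ^ j := by
      funext j
      rw [smul_pow, smul_comm]
    simp only [this, h2]
    exact hs.hasSum

lemma ExpDom.comp_mul {f : ℂ → Matrix (Fin n) (Fin n) ℂ} {a : ℝ} (h : ExpDom f a) (z : ℂ) :
    ExpDom (fun μ => f (z * μ)) (‖z‖ * a) := by
  obtain ⟨c, h1, h2⟩ := h
  refine ⟨fun j => z ^ j • c j, fun j => ?_, fun μ => ?_⟩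
  · rw [norm_smul, norm_pow, mul_pow, mul_div_assoc]
    exact mul_le_mul_of_nonneg_left (h1 j) (by positivity)
  · simpa [smul_smul, mul_pow, mul_comm, mul_left_comm] using h2 (z * μ)

lemma ExpDom.mul {f g : ℂ → Matrix (Fin n) (Fin n) ℂ} {a b : ℝ} (hf : ExpDom f a)
    (hg : ExpDom g b) : ExpDom (fun μ => f μ * g μ) (a + b) := by
  obtain ⟨c, hcb, hcs⟩ := hf
  obtain ⟨d, hdb, hds⟩ := hg
  refine ⟨fun j => ∑ i ∈ Finset.range (j + 1), c i * d (j - i), fun j => ?_, fun μ => ?_⟩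
  · calc ‖∑ i ∈ Finset.range (j + 1), c i * d (j - i)‖
        ≤ ∑ i ∈ Finset.range (j + 1), a ^ i / i ! * (b ^ (j - i) / (j - i)!) := by
          refine norm_sum_le_of_le _ fun i _ => ?_
          exact (norm_mul_le _ _).trans
            (mul_le_mul (hcb i) (hdb (j - i)) (norm_nonneg _) ((norm_nonneg _).trans (hcb i)))
      _ = (a + b) ^ j / j ! := by
          rw [add_pow, Finset.sum_div]
          refine Finset.sum_congr rfl fun i hi => ?_
          have hij : i ≤ j := Nat.lt_succ_iff.mp (Finset.mem_range.mp hi)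
          rw [Nat.cast_choose ℝ hij]
          have h1 : (i ! : ℝ) ≠ 0 := Nat.cast_ne_zero.mpr (Nat.factorial_ne_zero i)
          have h2 : ((j - i)! : ℝ) ≠ 0 := Nat.cast_ne_zero.mpr (Nat.factorial_ne_zero _)
          have h3 : (j ! : ℝ) ≠ 0 := Nat.cast_ne_zero.mpr (Nat.factorial_ne_zero j)
          field_simp
  · have h := hasSum_sum_range_mul_of_summable_norm
      (summable_norm_of_le hcb μ) (summable_norm_of_le hdb μ)
    rw [(hcs μ).tsum_eq, (hds μ).tsum_eq] at h
    convert h using 2 with j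
    · rfl
    · rfl
    rw [Finset.smul_sum]
    refine Finset.sum_congr rfl fun i hi => ?_
    have hij : i ≤ j := Nat.lt_succ_iff.mp (Finset.mem_range.mp hi)
    rw [smul_mul_smul_comm, ← pow_add, Nat.add_sub_cancel' hij]

lemma expDom_one : ExpDom (n := n) (fun _ => 1) 0 := by
  refine ⟨fun j => if j = 0 then 1 else 0, fun j => ?_, fun μ => ?_⟩
  · cases j with
    | zero => simpa using norm_one_le
    | succ j => simp [Nat.factorial]
  · have h := hasSum_single (f := fun j : ℕ =>
      μ ^ j • (if j = 0 then (1 : Matrix (Fin n) (Fin n) ℂ) else 0)) 0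
      (fun b hb => by simp [hb])
    simpa using h

lemma expDom_list_prod {a : ℝ} (ha : 0 ≤ a) :
    ∀ l : List (ℂ → Matrix (Fin n) (Fin n) ℂ), (∀ f ∈ l, ExpDom f a) →
      ExpDom (fun μ => (l.map (fun f => f μ)).prod) (l.length * a)
  | [] => fun _ => by
      simpa using expDom_one.of_eq (by norm_num)
  | f :: l => fun h => by
      have h1 : ExpDom f a := h f (by simp)
      have h2 := expDom_list_prod ha l (fun g hg => h g (by simp [hg]))
      refine ((h1.mul h2).congr fun μ => by simp).of_eq ?_
      simp only [List.length_cons]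
      push_cast
      ring

lemma rpow_half : (4 : ℝ) ^ ((1 : ℝ) / 2) = 2 := by
  rw [show (4 : ℝ) = 2 ^ (2 : ℕ) by norm_num, ← Real.rpow_natCast 2 2,
    ← Real.rpow_mul (by norm_num)]
  norm_num

lemma suzukiP_mem_s6 (k : ℕ) : 0 < suzukiP (k + 2) ∧ suzukiP (k + 2) ≤ 1 / 2 := by
  unfold suzukiP
  have hd : (0 : ℝ) < 2 * ((k + 2 : ℕ) : ℝ) - 1 := by
    push_cast
    nlinarith [Nat.cast_nonneg (α := ℝ) k]
  set e : ℝ := (1 : ℝ) / (2 * ((k + 2 : ℕ) : ℝ) - 1) with he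
  have he0 : 0 < e := by
    rw [he]
    positivity
  have heh : e ≤ 1 / 2 := by
    rw [he, div_le_div_iff₀ hd (by norm_num)]
    push_cast
    nlinarith [Nat.cast_nonneg (α := ℝ) k]
  have ht1 : 1 < (4 : ℝ) ^ e :=
    Real.one_lt_rpow_iff_of_pos (by norm_num) |>.mpr (Or.inl ⟨by norm_num, he0⟩)
  have ht2 : (4 : ℝ) ^ e ≤ 2 := by
    calc (4 : ℝ) ^ e ≤ (4 : ℝ) ^ ((1 : ℝ) / 2) :=
          Real.rpow_le_rpow_of_exponent_le (by norm_num) heh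
      _ = 2 := rpow_half
  constructor
  · apply div_pos one_pos
    linarith
  · rw [div_le_div_iff₀ (by linarith) (by norm_num)]
    linarith

variable {L : ℕ} {H : Fin L → Matrix (Fin n) (Fin n) ℂ} {Λ : ℝ}

lemma expDom_exp_half {B : Matrix (Fin n) (Fin n) ℂ} (hΛ0 : 0 ≤ Λ) (hB : ‖B‖ ≤ Λ) :
    ExpDom (fun μ => NormedSpace.exp ((μ / 2) • B)) (Λ / 2) := by
  have h := (expDom_exp ((2 : ℂ)⁻¹ • B)).congr (g := fun μ => NormedSpace.exp ((μ / 2) • B))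
    (fun μ => by rw [smul_smul, ← div_eq_mul_inv])
  refine h.mono (norm_nonneg _) ?_
  rw [norm_smul, norm_inv]
  have h2 : ‖(2 : ℂ)‖ = 2 := by
    simp
  rw [h2]
  rw [div_eq_inv_mul]
  exact mul_le_mul_of_nonneg_left hB (by norm_num)

lemma expDom_suzuki_one (hΛ0 : 0 ≤ Λ) (hΛb : ∀ i, ‖H i‖ ≤ Λ) :
    ExpDom (fun μ => suzuki H 1 μ) (L * Λ) := by
  have hhalf : (0 : ℝ) ≤ Λ / 2 := by positivity
  have hlist : ∀ G : Fin L → Matrix (Fin n) (Fin n) ℂ, (∀ i, ‖G i‖ ≤ Λ) →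
      ExpDom (fun μ => (List.ofFn fun i : Fin L =>
        NormedSpace.exp ((μ / 2) • G i)).prod) (L * (Λ / 2)) := by
    intro G hG
    have h := expDom_list_prod hhalf
      (List.ofFn fun i : Fin L => fun μ => NormedSpace.exp ((μ / 2) • G i)) ?_
    · refine (h.congr fun μ => ?_).of_eq (by simp)
      simp only [List.map_ofFn]
      rfl
    · intro f hf
      rw [List.mem_ofFn] at hf
      obtain ⟨i, rfl⟩ := hf
      exact expDom_exp_half hΛ0 (hG i)
  have h1 := hlist H hΛb
  have h2 := hlist (fun i => H i.rev) (fun i => hΛb i.rev)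
  refine ((h1.mul h2).congr fun μ => ?_).of_eq (by push_cast; ring)
  rw [suzuki]

lemma expDom_suzuki (hΛ0 : 0 ≤ Λ) (hΛb : ∀ i, ‖H i‖ ≤ Λ) :
    ∀ k : ℕ, ExpDom (fun μ => suzuki H (k + 1) μ) ((5 : ℝ) ^ k * (L * Λ))
  | 0 => by simpa using expDom_suzuki_one hΛ0 hΛb
  | (k + 1) => by
      have ih := expDom_suzuki hΛ0 hΛb k
      set A : ℝ := (5 : ℝ) ^ k * (L * Λ) with hA
      have hA0 : 0 ≤ A := by positivity
      obtain ⟨hp0, hph⟩ := suzukiP_mem_s6 k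
      have hz1 : ‖((suzukiP (k + 2) : ℝ) : ℂ)‖ ≤ 1 := by
        rw [Complex.norm_real, Real.norm_eq_abs, abs_of_pos hp0]
        linarith
      have hz2 : ‖1 - 4 * ((suzukiP (k + 2) : ℝ) : ℂ)‖ ≤ 1 := by
        have : (1 - 4 * ((suzukiP (k + 2) : ℝ) : ℂ)) = (((1 - 4 * suzukiP (k + 2) : ℝ)) : ℂ) := by
          push_cast
          ring
        rw [this, Complex.norm_real, Real.norm_eq_abs, abs_le]
        constructor <;> nlinarith
      have hX : ExpDom (fun μ => suzuki H (k + 1) ((suzukiP (k + 2) : ℂ) * μ)) A :=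
        (ih.comp_mul _).mono (by positivity)
          (mul_le_of_le_one_left hA0 hz1)
      have hY : ExpDom (fun μ =>
          suzuki H (k + 1) ((1 - 4 * (suzukiP (k + 2) : ℂ)) * μ)) A :=
        (ih.comp_mul _).mono (by positivity)
          (mul_le_of_le_one_left hA0 hz2)
      have h2 := hX.mul hX
      have h3 := h2.mul hY
      have h4 := h3.mul h2
      refine (h4.congr fun μ => ?_).of_eq (by rw [hA]; ring)
      rw [suzuki]
      simp only [pow_two]

lemma coeff_eq_of_hasSum {c d : ℕ → Matrix (Fin n) (Fin n) ℂ}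
    {f : ℂ → Matrix (Fin n) (Fin n) ℂ}
    (hc : ∀ μ : ℂ, HasSum (fun j => μ ^ j • c j) (f μ))
    (hd : ∀ μ : ℂ, HasSum (fun j => μ ^ j • d j) (f μ)) : c = d := by
  set e : ℕ → Matrix (Fin n) (Fin n) ℂ := fun j => c j - d j with hedef
  have h0 : ∀ μ : ℂ, HasSum (fun j => μ ^ j • e j) 0 := fun μ => by
    simpa [hedef, smul_sub] using (hc μ).sub (hd μ)
  have h1 : Filter.Tendsto (fun j => ‖e j‖) Filter.atTop (nhds 0) := by
    have h2 := (h0 1).summable.tendsto_atTop_zero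
    simp only [one_pow, one_smul] at h2
    simpa using h2.norm
  obtain ⟨Cb, hCb⟩ := h1.bddAbove_range
  set p : FormalMultilinearSeries ℂ ℂ (Matrix (Fin n) (Fin n) ℂ) :=
    fun j => ContinuousMultilinearMap.mkPiRing ℂ (Fin j) (e j) with hp
  have hrad : 1 ≤ p.radius := by
    refine p.le_radius_of_bound Cb fun j => ?_
    rw [hp]
    simp only [ContinuousMultilinearMap.norm_mkPiRing, NNReal.coe_one, one_pow, mul_one]
    exact hCb (Set.mem_range_self j)
  have hzero : HasFPowerSeriesAt (fun _ => (0 : Matrix (Fin n) (Fin n) ℂ)) p 0 := by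
    refine ⟨1, ⟨hrad, one_pos, fun {y} _ => ?_⟩⟩
    simpa [hp, ContinuousMultilinearMap.mkPiRing_apply] using h0 y
  have hpz : p = 0 := hzero.eq_zero
  funext j
  have hj : p j = 0 := by rw [hpz]; rfl
  have h3 := congrFun (congrArg DFunLike.coe hj) fun _ => (1 : ℂ)
  simp only [hp, ContinuousMultilinearMap.mkPiRing_apply, Finset.prod_const, one_pow,
    one_smul, ContinuousMultilinearMap.zero_apply] at h3
  exact sub_eq_zero.mp h3

lemma tail_bound {c : ℕ → Matrix (Fin n) (Fin n) ℂ} {a : ℝ}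
    (hc : ∀ j, ‖c j‖ ≤ a ^ j / j !) (lam : ℂ) (m : ℕ) :
    ‖∑' j : ℕ, lam ^ (m + j) • c (m + j)‖ ≤
      (‖lam‖ * a) ^ m / m ! * Real.exp (‖lam‖ * a) := by
  have ha : 0 ≤ a := le_trans (norm_nonneg _) (by simpa using hc 1)
  set x : ℝ := ‖lam‖ * a with hxdef
  have hx0 : 0 ≤ x := by positivity
  have hg : HasSum (fun j : ℕ => x ^ m / m ! * (x ^ j / j !))
      (x ^ m / m ! * Real.exp x) := by
    have h1 : HasSum (fun j : ℕ => x ^ j / j !) (Real.exp x) := by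
      rw [Real.exp_eq_exp_ℝ]
      exact NormedSpace.expSeries_div_hasSum_exp x
    exact h1.mul_left _
  refine tsum_of_norm_bounded hg fun j => ?_
  rw [norm_smul, norm_pow]
  have hfac : ((m ! * j ! : ℕ) : ℝ) ≤ (((m + j)! : ℕ) : ℝ) :=
    Nat.cast_le.mpr (Nat.le_of_dvd (Nat.factorial_pos _)
      (Nat.factorial_mul_factorial_dvd_factorial_add m j))
  calc ‖lam‖ ^ (m + j) * ‖c (m + j)‖
      ≤ ‖lam‖ ^ (m + j) * (a ^ (m + j) / (m + j)!) := by
        exact mul_le_mul_of_nonneg_left (hc _) (by positivity)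
    _ = x ^ (m + j) / (m + j)! := by rw [hxdef, mul_pow]; ring
    _ ≤ x ^ (m + j) / ((m ! * j ! : ℕ) : ℝ) := by
        have hpos : (0 : ℝ) < ((m ! * j ! : ℕ) : ℝ) := by
          exact_mod_cast Nat.mul_pos (Nat.factorial_pos m) (Nat.factorial_pos j)
        exact div_le_div_of_nonneg_left (pow_nonneg hx0 _) hpos hfac
    _ = x ^ m / m ! * (x ^ j / j !) := by
        push_cast
        rw [pow_add]
        ring

end TrotterAux

open TrotterAux

/-- Let `H_1, …, H_L` (`L ≥ 1`) be Hermitian `n×n` complex matrices with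
`Λ := max_i ‖H_i‖`, let `k ≥ 1`, `λ ∈ ℂ` and `κ := 2·5^{k−1}`.  With
`V(λ/2) := exp(λ Σ_i H_i / 2)` and
`D(λ/2) := R_{2k}(V(λ/2)) − R_{2k}(S^{(2k)}(λ/2))` (where `C_j` are the power-series
coefficients of the `(2k)`-th order Trotter–Suzuki formula `S^{(2k)}(λ/2)` in `λ`), the
product of operator norms satisfies
`‖V(λ/2)†‖ · ‖D(λ/2)‖ ≤ 2 (κ|λ|LΛ/2)^{2k+1} / (2k+1)! · exp([κ+1]|λ|LΛ/2)`. -/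
theorem opNorm_Vdagger_mul_opNorm_D_le {n L : ℕ} (hL : 1 ≤ L)
    (H : Fin L → Matrix (Fin n) (Fin n) ℂ) (hH : ∀ i, (H i).IsHermitian)
    (Λ : ℝ) (hΛ : IsGreatest (Set.range fun i => ‖H i‖) Λ)
    (k : ℕ) (hk : 1 ≤ k) (lam : ℂ)
    (C : ℕ → Matrix (Fin n) (Fin n) ℂ)
    (hC : ∀ μ : ℂ, HasSum (fun j : ℕ => μ ^ j • C j) (suzuki H k (μ / 2))) :
    ‖(NormedSpace.exp ((lam / 2) • ∑ i, H i))ᴴ‖ *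
        ‖(∑' j : ℕ, lam ^ (2 * k + 1 + j) •
            (((2 * k + 1 + j)! : ℂ)⁻¹ • ((2 : ℂ)⁻¹ • ∑ i, H i) ^ (2 * k + 1 + j))) -
          ∑' j : ℕ, lam ^ (2 * k + 1 + j) • C (2 * k + 1 + j)‖ ≤
      2 * ((2 * 5 ^ (k - 1) : ℝ) * ‖lam‖ * L * Λ / 2) ^ (2 * k + 1) /
          ((2 * k + 1)! : ℝ) *
        Real.exp (((2 * 5 ^ (k - 1) : ℝ) + 1) * ‖lam‖ * L * Λ / 2) := by

  have hΛb : ∀ i, ‖H i‖ ≤ Λ := fun i => hΛ.2 ⟨i, rfl⟩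
  obtain ⟨i0, hi0⟩ := hΛ.1
  have hΛ0 : 0 ≤ Λ := hi0 ▸ norm_nonneg _
  set r : ℝ := ‖lam‖ with hr
  have hr0 : 0 ≤ r := norm_nonneg _
  set κ' : ℝ := 5 ^ (k - 1) with hκ'
  have hκ'1 : 1 ≤ κ' := one_le_pow₀ (by norm_num)
  set m : ℕ := 2 * k + 1 with hm
  set A : Matrix (Fin n) (Fin n) ℂ := (2 : ℂ)⁻¹ • ∑ i, H i with hAdef
  set x : ℝ := r * (↑L * Λ / 2) with hx
  have hx0 : 0 ≤ x := by
    rw [hx]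
    have : (0 : ℝ) ≤ ↑L * Λ / 2 := by positivity
    positivity
  have hn2 : ‖((2 : ℂ))⁻¹‖ = (2 : ℝ)⁻¹ := by
    rw [norm_inv]
    norm_num
  have hsum : ‖∑ i, H i‖ ≤ (L : ℝ) * Λ := by
    refine (norm_sum_le _ _).trans ?_
    calc ∑ _i : Fin L, ‖H _i‖ ≤ ∑ _i : Fin L, Λ := Finset.sum_le_sum fun i _ => hΛb i
      _ = L * Λ := by rw [Finset.sum_const, Finset.card_univ, Fintype.card_fin, nsmul_eq_mul]
  have hAn : ‖A‖ ≤ (L : ℝ) * Λ / 2 := by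
    rw [hAdef, norm_smul, hn2]
    rw [div_eq_inv_mul]
    exact mul_le_mul_of_nonneg_left hsum (by norm_num)
  -- bound on exp coefficients
  have hcV : ∀ j : ℕ, ‖((j ! : ℂ))⁻¹ • A ^ j‖ ≤ ((L : ℝ) * Λ / 2) ^ j / j ! := by
    intro j
    rw [norm_smul, norm_inv, Complex.norm_natCast, div_eq_inv_mul]
    refine mul_le_mul_of_nonneg_left ?_ (by positivity)
    exact (norm_pow_le A j).trans (pow_le_pow_left₀ (norm_nonneg _) hAn j)
  -- the norm of V†
  have hV : ‖(NormedSpace.exp ((lam / 2) • ∑ i, H i))ᴴ‖ ≤ Real.exp x := by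
    rw [Matrix.l2_opNorm_conjTranspose]
    have h1 : (lam / 2) • ∑ i, H i = lam • A := by
      rw [hAdef, smul_smul, ← div_eq_mul_inv]
    rw [h1]
    obtain ⟨cE, hcEb, hcEs⟩ := expDom_exp A
    have hcEb' : ∀ j, ‖cE j‖ ≤ ((L : ℝ) * Λ / 2) ^ j / j ! := fun j =>
      (hcEb j).trans (by gcongr <;> first | exact norm_nonneg _ | exact hAn)
    rw [show NormedSpace.exp (lam • A) = ∑' j : ℕ, lam ^ j • cE j from
      ((hcEs lam).tsum_eq).symm]
    have h2 := tail_bound hcEb' lam 0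
    simp only [pow_zero, Nat.factorial_zero, Nat.cast_one, div_one, one_mul, zero_add] at h2
    rw [← hr, ← hx] at h2
    exact h2
  -- tail bound for V
  have hT1 := tail_bound hcV lam m
  rw [← hr, ← hx] at hT1
  -- coefficients of the Suzuki formula
  have h5 := expDom_suzuki (H := H) hΛ0 hΛb (k - 1)
  rw [Nat.sub_add_cancel hk] at h5
  have h7 : ExpDom (fun μ => suzuki H k (μ / 2)) (κ' * (↑L * Λ) / 2) := by
    refine ((h5.comp_mul ((2 : ℂ)⁻¹)).congr fun μ =>
      by rw [show (2 : ℂ)⁻¹ * μ = μ / 2 by ring]).of_eq ?_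
    rw [hn2, hκ']
    ring
  obtain ⟨E, hEb, hEs⟩ := h7
  have hCE : C = E := coeff_eq_of_hasSum hC hEs
  have hCb : ∀ j, ‖C j‖ ≤ (κ' * (↑L * Λ) / 2) ^ j / j ! := by
    rw [hCE]
    exact hEb
  have hT2 := tail_bound hCb lam m
  rw [← hr, show r * (κ' * (↑L * Λ) / 2) = κ' * x from by rw [hx]; ring] at hT2
  -- combine
  refine le_trans (mul_le_mul hV (le_trans (norm_sub_le _ _) (add_le_add hT1 hT2))
    (norm_nonneg _) (Real.exp_nonneg _)) ?_
  have h1 : x ^ m / (m ! : ℝ) * Real.exp x ≤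
      (2 * κ' * x) ^ m / (m ! : ℝ) * Real.exp (2 * κ' * x) := by
    have hle : x ≤ 2 * κ' * x := by nlinarith
    gcongr
  have h2 : (κ' * x) ^ m / (m ! : ℝ) * Real.exp (κ' * x) ≤
      (2 * κ' * x) ^ m / (m ! : ℝ) * Real.exp (2 * κ' * x) := by
    have hle : κ' * x ≤ 2 * κ' * x := by nlinarith
    have hk0 : 0 ≤ κ' * x := by nlinarith
    gcongr
  calc Real.exp x * (x ^ m / (m ! : ℝ) * Real.exp x +
        (κ' * x) ^ m / (m ! : ℝ) * Real.exp (κ' * x))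
      ≤ Real.exp x * ((2 * κ' * x) ^ m / (m ! : ℝ) * Real.exp (2 * κ' * x) +
        (2 * κ' * x) ^ m / (m ! : ℝ) * Real.exp (2 * κ' * x)) := by
        exact mul_le_mul_of_nonneg_left (add_le_add h1 h2) (Real.exp_nonneg _)
    _ = 2 * (2 * κ' * r * ↑L * Λ / 2) ^ m / (m ! : ℝ) *
        Real.exp ((2 * κ' + 1) * r * ↑L * Λ / 2) := by
        rw [show (2 * κ' + 1) * r * (L : ℝ) * Λ / 2 = 2 * κ' * x + x from by rw [hx]; ring,
          show 2 * κ' * r * (L : ℝ) * Λ / 2 = 2 * κ' * x from by rw [hx]; ring,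
          Real.exp_add]
        ring
end
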